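/- Under the stated conditional average treatment effect setup, the average treatment effect admits the doubly robust (augmented inverse probability weighting) representation: E[Y(1) − Y(0)] = E[ μ⁰(1,S) + T·(Y − μ⁰(1,S))/π⁰(S) − μ⁰(0,S) − (1−T)·(Y − μ⁰(0,S))/(1 − π⁰(S)) ]. -/

import Mathlib

open MeasureTheory ProbabilityTheory

lemma my_integrable_of_bdd {Ω : Type*} [MeasurableSpace Ω] {P : Measure Ω} [IsFiniteMeasure P]
    {f : Ω → ℝ} (hf : Measurable f) {C : ℝ} (h : ∀ ω, |f ω| ≤ C) : Integrable f P :=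
  (integrable_const C).mono' hf.aestronglyMeasurable
    (Filter.Eventually.of_forall (by simpa [Real.norm_eq_abs] using h))

lemma my_abs_mul_le {a b A B : ℝ} (ha : |a| ≤ A) (hb : |b| ≤ B) : |a * b| ≤ A * B := by
  rw [abs_mul]
  exact mul_le_mul ha hb (abs_nonneg b) ((abs_nonneg a).trans ha)

/-- Pull-out: integrating a bounded `m`-measurable function against `f` equals
integrating it against the conditional expectation of `f`. -/
lemma my_pullout {Ω : Type*} {m : MeasurableSpace Ω} [m0 : MeasurableSpace Ω] (hm : m ≤ m0)
    (P : Measure Ω) [IsProbabilityMeasure P] {f h : Ω → ℝ}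
    (hf : Integrable f P) (hh : StronglyMeasurable[m] h) {C : ℝ} (hC : ∀ ω, |h ω| ≤ C) :
    ∫ ω, h ω * f ω ∂P = ∫ ω, h ω * (P[f|m]) ω ∂P := by
  haveI : SigmaFinite (P.trim hm) := by
    haveI := isFiniteMeasure_trim (μ := P) hm
    infer_instance
  have hint : Integrable (h * f) P :=
    hf.bdd_mul (hh.mono hm).aestronglyMeasurable
      (Filter.Eventually.of_forall (by simpa [Real.norm_eq_abs] using hC))
  have h1 : P[h * f|m] =ᵐ[P] h * P[f|m] := condExp_mul_of_stronglyMeasurable_left hh hint hf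
  calc ∫ ω, h ω * f ω ∂P = ∫ ω, (h * f) ω ∂P := rfl
    _ = ∫ ω, (P[h * f|m]) ω ∂P := (integral_condExp hm).symm
    _ = ∫ ω, (h * P[f|m]) ω ∂P := integral_congr_ae h1
    _ = ∫ ω, h ω * (P[f|m]) ω ∂P := rfl

/-- Core identity: if `W` is (a version of) `E[T | m]`, `T` is `{0,1}`-valued, `V` is
conditionally independent of `T` given `m` (expressed through the product rule for
conditional probabilities), and `G, W` are bounded `m`-measurable, then
`∫ T·V·G = ∫ W·V·G`. -/
lemma my_core {Ω : Type*} {m : MeasurableSpace Ω} [m0 : MeasurableSpace Ω] (hm : m ≤ m0)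
    (P : Measure Ω) [IsProbabilityMeasure P]
    {T V G W : Ω → ℝ}
    (hT : Measurable T) (hT01 : ∀ ω, T ω = 0 ∨ T ω = 1)
    (hV : Measurable V) {CV : ℝ} (hVb : ∀ ω, |V ω| ≤ CV)
    (hGm : StronglyMeasurable[m] G) {CG : ℝ} (hGb : ∀ ω, |G ω| ≤ CG)
    (hWm : StronglyMeasurable[m] W) {CW : ℝ} (hWb : ∀ ω, |W ω| ≤ CW)
    (hcond : W =ᵐ[P] P[T|m])
    (hprod : ∀ s t : Set ℝ, MeasurableSet s → MeasurableSet t →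
      (P[((V ⁻¹' s ∩ T ⁻¹' t).indicator (fun _ => (1:ℝ)))|m]) =ᵐ[P]
        fun ω => (P[((V ⁻¹' s).indicator (fun _ => (1:ℝ)))|m]) ω *
          (P[((T ⁻¹' t).indicator (fun _ => (1:ℝ)))|m]) ω) :
    ∫ ω, T ω * V ω * G ω ∂P = ∫ ω, W ω * V ω * G ω ∂P := by
  have hGmeas : Measurable G := (hGm.mono hm).measurable
  have hWmeas : Measurable W := (hWm.mono hm).measurable
  have hA : MeasurableSet (T ⁻¹' {1}) := hT (measurableSet_singleton 1)
  have hTind : ∀ ω, T ω = (T ⁻¹' {1}).indicator (fun _ => (1:ℝ)) ω := by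
    intro ω
    rcases hT01 ω with h | h <;>
      simp [Set.indicator_apply, Set.mem_preimage, h]
  have hTb : ∀ ω, |T ω| ≤ 1 := by
    intro ω; rcases hT01 ω with h | h <;> simp [h]
  have hindint : ∀ (E : Set Ω), MeasurableSet E →
      Integrable (E.indicator (fun _ => (1:ℝ))) P := by
    intro E hE
    refine my_integrable_of_bdd (measurable_const.indicator hE) (C := 1) ?_
    intro ω; by_cases h : ω ∈ E <;> simp [Set.indicator_apply, h]
  -- Step C : the set integrals of ψ over preimages of V vanish
  have hψs : ∀ s : Set ℝ, MeasurableSet s →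
      ∫ ω in V ⁻¹' s, ((T ω - W ω) * G ω) ∂P = 0 := by
    intro s hs
    have hB : MeasurableSet (V ⁻¹' s) := hV hs
    have e1 : ∫ ω in V ⁻¹' s, (T ω * G ω) ∂P
        = ∫ ω, G ω * ((V ⁻¹' s ∩ T ⁻¹' {1}).indicator (fun _ => (1:ℝ)) ω) ∂P := by
      rw [← integral_indicator hB]
      refine integral_congr_ae (Filter.Eventually.of_forall fun ω => ?_)
      by_cases hmem : ω ∈ V ⁻¹' s
      · by_cases hmem2 : ω ∈ T ⁻¹' {1}
        · have hT1 : T ω = 1 := hmem2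
          simp [Set.indicator_apply, hmem, hmem2, hT1]
        · have hT0 : T ω = 0 := by
            rcases hT01 ω with h | h
            · exact h
            · exact absurd (by simp [Set.mem_preimage, h] : ω ∈ T ⁻¹' {1}) hmem2
          simp [Set.indicator_apply, hmem, hmem2, hT0]
      · have hmem' : ω ∉ V ⁻¹' s ∩ T ⁻¹' {1} := fun h => hmem h.1
        simp [Set.indicator_apply, hmem, hmem']
    have e2 := my_pullout hm P (hindint _ (hB.inter hA)) hGm hGb
    have e3 : P[((V ⁻¹' s ∩ T ⁻¹' {1}).indicator (fun _ => (1:ℝ)))|m]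
        =ᵐ[P] fun ω => (P[((V ⁻¹' s).indicator (fun _ => (1:ℝ)))|m]) ω * W ω := by
      have h1 := hprod s {1} hs (measurableSet_singleton 1)
      have h2 : P[((T ⁻¹' {1}).indicator (fun _ => (1:ℝ)))|m] =ᵐ[P] W := by
        have hfe : (T ⁻¹' {1}).indicator (fun _ => (1:ℝ)) = T := funext fun ω => (hTind ω).symm
        rw [hfe]; exact hcond.symm
      filter_upwards [h1, h2] with ω hω1 hω2
      rw [hω1, hω2]
    have e4 : ∫ ω, G ω * (P[((V ⁻¹' s ∩ T ⁻¹' {1}).indicator (fun _ => (1:ℝ)))|m]) ω ∂P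
        = ∫ ω, (G ω * W ω) * (P[((V ⁻¹' s).indicator (fun _ => (1:ℝ)))|m]) ω ∂P := by
      refine integral_congr_ae ?_
      filter_upwards [e3] with ω hω
      rw [hω]; ring
    have e5 : ∫ ω, (G ω * W ω) * ((V ⁻¹' s).indicator (fun _ => (1:ℝ)) ω) ∂P
        = ∫ ω, (G ω * W ω) * (P[((V ⁻¹' s).indicator (fun _ => (1:ℝ)))|m]) ω ∂P :=
      my_pullout hm P (hindint _ hB) (hGm.mul hWm)
        (C := CG * CW) (fun ω => my_abs_mul_le (hGb ω) (hWb ω))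
    have e6 : ∫ ω in V ⁻¹' s, (W ω * G ω) ∂P
        = ∫ ω, (G ω * W ω) * ((V ⁻¹' s).indicator (fun _ => (1:ℝ)) ω) ∂P := by
      rw [← integral_indicator hB]
      refine integral_congr_ae (Filter.Eventually.of_forall fun ω => ?_)
      by_cases hmem : ω ∈ V ⁻¹' s <;> simp [Set.indicator_apply, hmem] <;> ring
    have hTGint : IntegrableOn (fun ω => T ω * G ω) (V ⁻¹' s) P :=
      (my_integrable_of_bdd (hT.mul hGmeas)
        (fun ω => my_abs_mul_le (hTb ω) (hGb ω))).integrableOn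
    have hWGint : IntegrableOn (fun ω => W ω * G ω) (V ⁻¹' s) P :=
      (my_integrable_of_bdd (hWmeas.mul hGmeas)
        (fun ω => my_abs_mul_le (hWb ω) (hGb ω))).integrableOn
    have esplit : ∫ ω in V ⁻¹' s, ((T ω - W ω) * G ω) ∂P
        = ∫ ω in V ⁻¹' s, (T ω * G ω) ∂P - ∫ ω in V ⁻¹' s, (W ω * G ω) ∂P := by
      rw [← integral_sub hTGint hWGint]
      refine integral_congr_ae (Filter.Eventually.of_forall fun ω => ?_)
      ring
    rw [esplit, e1, e2, e4, ← e5, ← e6, sub_self]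
  -- Step D : the conditional expectation of ψ given σ(V) is zero
  have hψmeas : Measurable (fun ω => (T ω - W ω) * G ω) := (hT.sub hWmeas).mul hGmeas
  have hψb : ∀ ω, |(T ω - W ω) * G ω| ≤ (1 + CW) * CG := by
    intro ω
    refine my_abs_mul_le ?_ (hGb ω)
    calc |T ω - W ω| ≤ |T ω| + |W ω| := abs_sub _ _
      _ ≤ 1 + CW := add_le_add (hTb ω) (hWb ω)
  have hψint : Integrable (fun ω => (T ω - W ω) * G ω) P := my_integrable_of_bdd hψmeas hψb
  have hmV : MeasurableSpace.comap V inferInstance ≤ m0 := hV.comap_le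
  haveI : SigmaFinite (P.trim hmV) := by
    haveI := isFiniteMeasure_trim (μ := P) hmV
    infer_instance
  have hzero : (fun _ => (0:ℝ)) =ᵐ[P]
      P[(fun ω => (T ω - W ω) * G ω)|MeasurableSpace.comap V inferInstance] := by
    refine ae_eq_condExp_of_forall_setIntegral_eq hmV hψint
      (fun s _ _ => (integrable_const (0:ℝ)).integrableOn) ?_ ?_
    · rintro s ⟨u, hu, rfl⟩ -
      rw [integral_const]
      simp only [smul_zero]
      exact (hψs u hu).symm
    · exact stronglyMeasurable_const.aestronglyMeasurable
  have hVsm : StronglyMeasurable[MeasurableSpace.comap V inferInstance] V :=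
    (Measurable.of_comap_le le_rfl).stronglyMeasurable
  have hfinal : ∫ ω, V ω * ((T ω - W ω) * G ω) ∂P = 0 := by
    rw [my_pullout hmV P hψint hVsm hVb]
    rw [show (∫ ω, V ω *
        (P[(fun ω => (T ω - W ω) * G ω)|MeasurableSpace.comap V inferInstance]) ω ∂P)
        = ∫ ω, (0:ℝ) ∂P from integral_congr_ae (by
          filter_upwards [hzero] with ω hω
          rw [← hω, mul_zero])]
    simp
  have hTVGint : Integrable (fun ω => T ω * V ω * G ω) P :=
    my_integrable_of_bdd ((hT.mul hV).mul hGmeas)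
      (fun ω => my_abs_mul_le (my_abs_mul_le (hTb ω) (hVb ω)) (hGb ω))
  have hWVGint : Integrable (fun ω => W ω * V ω * G ω) P :=
    my_integrable_of_bdd ((hWmeas.mul hV).mul hGmeas)
      (fun ω => my_abs_mul_le (my_abs_mul_le (hWb ω) (hVb ω)) (hGb ω))
  have : ∫ ω, (T ω * V ω * G ω - W ω * V ω * G ω) ∂P = 0 := by
    rw [show (∫ ω, (T ω * V ω * G ω - W ω * V ω * G ω) ∂P)
        = ∫ ω, V ω * ((T ω - W ω) * G ω) ∂P from
      integral_congr_ae (Filter.Eventually.of_forall fun ω => by ring)]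
    exact hfinal
  rw [integral_sub hTVGint hWVGint] at this
  linarith
/-- Doubly robust (augmented inverse probability weighting) representation of
the average treatment effect. -/
theorem ate_doubly_robust_representation
    {Ω : Type*} [MeasurableSpace Ω] [StandardBorelSpace Ω] [Nonempty Ω]
    (P : Measure Ω) [IsProbabilityMeasure P]
    (d : ℕ) (S : Ω → (Fin d → ℝ)) (hS : Measurable S)
    (T : Ω → ℝ) (hT : Measurable T) (hT01 : ∀ ω, T ω = 0 ∨ T ω = 1)
    (Y0 Y1 : Ω → ℝ) (hY0 : Measurable Y0) (hY1 : Measurable Y1)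
    (hY0b : ∃ C, ∀ ω, |Y0 ω| ≤ C) (hY1b : ∃ C, ∀ ω, |Y1 ω| ≤ C)
    (Y : Ω → ℝ) (hYdef : ∀ ω, Y ω = T ω * Y1 ω + (1 - T ω) * Y0 ω)
    (M : ℝ) (hM : 0 < M)
    (π0 : (Fin d → ℝ) → ℝ) (hπ0m : Measurable π0) (hπ0b : ∃ C, ∀ x, |π0 x| ≤ C)
    (hπ0mom : ∀ h : (Fin d → ℝ) → ℝ, Measurable h → (∃ C, ∀ x, |h x| ≤ C) →
      ∫ ω, T ω * h (S ω) ∂P = ∫ ω, π0 (S ω) * h (S ω) ∂P)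
    (hpos : ∀ᵐ ω ∂P, 1 / M ≤ π0 (S ω) ∧ π0 (S ω) ≤ 1 - 1 / M)
    (μ1 μ0 : (Fin d → ℝ) → ℝ) (hμ1m : Measurable μ1) (hμ0m : Measurable μ0)
    (hμ1b : ∃ C, ∀ x, |μ1 x| ≤ C) (hμ0b : ∃ C, ∀ x, |μ0 x| ≤ C)
    (hμ1mom : ∀ h : (Fin d → ℝ) → ℝ, Measurable h → (∃ C, ∀ x, |h x| ≤ C) →
      ∫ ω, T ω * Y ω * h (S ω) ∂P = ∫ ω, T ω * μ1 (S ω) * h (S ω) ∂P)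
    (hμ0mom : ∀ h : (Fin d → ℝ) → ℝ, Measurable h → (∃ C, ∀ x, |h x| ≤ C) →
      ∫ ω, (1 - T ω) * Y ω * h (S ω) ∂P = ∫ ω, (1 - T ω) * μ0 (S ω) * h (S ω) ∂P)
    (hign : CondIndepFun (MeasurableSpace.comap S inferInstance) hS.comap_le
      (fun ω => (Y0 ω, Y1 ω)) T P) :
    ∫ ω, (Y1 ω - Y0 ω) ∂P
      = ∫ ω, (μ1 (S ω) + T ω * (Y ω - μ1 (S ω)) / π0 (S ω)
          - μ0 (S ω) - (1 - T ω) * (Y ω - μ0 (S ω)) / (1 - π0 (S ω))) ∂P := by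
  obtain ⟨C0, hY0b⟩ := hY0b
  obtain ⟨C1, hY1b⟩ := hY1b
  obtain ⟨Cπ, hπ0b⟩ := hπ0b
  obtain ⟨Cμ1, hμ1b⟩ := hμ1b
  obtain ⟨Cμ0, hμ0b⟩ := hμ0b
  have hC0 : 0 ≤ C0 := (abs_nonneg _).trans (hY0b (Classical.arbitrary Ω))
  have hC1 : 0 ≤ C1 := (abs_nonneg _).trans (hY1b (Classical.arbitrary Ω))
  have hM' : 0 < 1 / M := by positivity
  have hm : MeasurableSpace.comap S inferInstance ≤ ‹MeasurableSpace Ω› := hS.comap_le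
  have hSm : Measurable[MeasurableSpace.comap S inferInstance] S :=
    Measurable.of_comap_le le_rfl
  haveI : SigmaFinite (P.trim hm) := by
    haveI := isFiniteMeasure_trim (μ := P) hm
    infer_instance
  -- the truncated inverse weights
  set h1 : (Fin d → ℝ) → ℝ := fun x => (max (π0 x) (1 / M))⁻¹ with hh1def
  set h0 : (Fin d → ℝ) → ℝ := fun x => (max (1 - π0 x) (1 / M))⁻¹ with hh0def
  have hh1m : Measurable h1 := (hπ0m.max measurable_const).inv
  have hh0m : Measurable h0 := ((measurable_const.sub hπ0m).max measurable_const).inv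
  have hmaxb : ∀ a : ℝ, |(max a (1 / M))⁻¹| ≤ M := by
    intro a
    have h1' : 0 < max a (1 / M) := lt_of_lt_of_le hM' (le_max_right _ _)
    rw [abs_of_pos (inv_pos.mpr h1')]
    calc (max a (1 / M))⁻¹ ≤ (1 / M)⁻¹ := by
          exact inv_anti₀ hM' (le_max_right _ _)
      _ = M := by rw [one_div, inv_inv]
  have hh1b : ∀ x, |h1 x| ≤ M := fun x => hmaxb _
  have hh0b : ∀ x, |h0 x| ≤ M := fun x => hmaxb _
  have hTb : ∀ ω, |T ω| ≤ 1 := by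
    intro ω; rcases hT01 ω with h | h <;> simp [h]
  have h1Tb : ∀ ω, |1 - T ω| ≤ 1 := by
    intro ω; rcases hT01 ω with h | h <;> simp [h]
  have hYb : ∀ ω, |Y ω| ≤ C0 + C1 := by
    intro ω
    rcases hT01 ω with h | h
    · rw [hYdef ω, h]
      simpa using le_add_of_nonneg_right hC1 |>.trans' (by simpa using hY0b ω)
    · rw [hYdef ω, h]
      simpa using le_add_of_nonneg_left hC0 |>.trans' (by simpa using hY1b ω)
  -- a.e. facts about the weights
  have hae : ∀ᵐ ω ∂P, π0 (S ω) * h1 (S ω) = 1 ∧ (1 - π0 (S ω)) * h0 (S ω) = 1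
      ∧ h1 (S ω) = (π0 (S ω))⁻¹ ∧ h0 (S ω) = (1 - π0 (S ω))⁻¹ := by
    filter_upwards [hpos] with ω hω
    obtain ⟨hl, hr⟩ := hω
    have hp1 : 0 < π0 (S ω) := lt_of_lt_of_le hM' hl
    have hl' : 1 / M ≤ 1 - π0 (S ω) := by linarith
    have hp0 : 0 < 1 - π0 (S ω) := lt_of_lt_of_le hM' hl'
    have e1 : h1 (S ω) = (π0 (S ω))⁻¹ := by
      rw [hh1def]; simp only []; rw [max_eq_left hl]
    have e0 : h0 (S ω) = (1 - π0 (S ω))⁻¹ := by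
      rw [hh0def]; simp only []; rw [max_eq_left hl']
    exact ⟨by rw [e1]; exact mul_inv_cancel₀ hp1.ne',
      by rw [e0]; exact mul_inv_cancel₀ hp0.ne', e1, e0⟩
  -- π0 ∘ S is a version of E[T | σ(S)]
  have hcond : (fun ω => π0 (S ω)) =ᵐ[P] P[T|MeasurableSpace.comap S inferInstance] := by
    refine ae_eq_condExp_of_forall_setIntegral_eq hm (my_integrable_of_bdd hT hTb)
      (fun s _ _ => (my_integrable_of_bdd (hπ0m.comp hS) (fun ω => hπ0b (S ω))).integrableOn)
      ?_ ((hπ0m.comp hSm).stronglyMeasurable.aestronglyMeasurable)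
    rintro s ⟨B, hB, rfl⟩ -
    have hmom := hπ0mom (B.indicator fun _ => (1:ℝ)) (measurable_const.indicator hB)
      ⟨1, fun x => by by_cases h : x ∈ B <;> simp [Set.indicator_apply, h]⟩
    have l1 : ∫ ω, T ω * (B.indicator (fun _ => (1:ℝ))) (S ω) ∂P
        = ∫ ω in S ⁻¹' B, T ω ∂P := by
      rw [← integral_indicator (hS hB)]
      refine integral_congr_ae (Filter.Eventually.of_forall fun ω => ?_)
      by_cases h : ω ∈ S ⁻¹' B
      · have h' : S ω ∈ B := h
        simp [Set.indicator_apply, h, h']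
      · have h' : S ω ∉ B := h
        simp [Set.indicator_apply, h, h']
    have l2 : ∫ ω, π0 (S ω) * (B.indicator (fun _ => (1:ℝ))) (S ω) ∂P
        = ∫ ω in S ⁻¹' B, π0 (S ω) ∂P := by
      rw [← integral_indicator (hS hB)]
      refine integral_congr_ae (Filter.Eventually.of_forall fun ω => ?_)
      by_cases h : ω ∈ S ⁻¹' B
      · have h' : S ω ∈ B := h
        simp [Set.indicator_apply, h, h']
      · have h' : S ω ∉ B := h
        simp [Set.indicator_apply, h, h']
    rw [← l1, ← l2, hmom]
  -- conditional independence of each potential outcome from T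
  have hci1 : CondIndepFun (MeasurableSpace.comap S inferInstance) hS.comap_le Y1 T P := by
    have h := hign.comp measurable_snd measurable_id
    simpa [Function.comp_def] using h
  have hci0 : CondIndepFun (MeasurableSpace.comap S inferInstance) hS.comap_le Y0 T P := by
    have h := hign.comp measurable_fst measurable_id
    simpa [Function.comp_def] using h
  have hprod1 := (condIndepFun_iff_condExp_inter_preimage_eq_mul hY1 hT).mp hci1
  have hprod0 := (condIndepFun_iff_condExp_inter_preimage_eq_mul hY0 hT).mp hci0
  -- key identities
  have key1 : ∫ ω, T ω * Y1 ω * h1 (S ω) ∂P = ∫ ω, π0 (S ω) * Y1 ω * h1 (S ω) ∂P :=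
    my_core hm P hT hT01 hY1 hY1b ((hh1m.comp hSm).stronglyMeasurable)
      (fun ω => hh1b (S ω)) ((hπ0m.comp hSm).stronglyMeasurable) (fun ω => hπ0b (S ω))
      hcond hprod1
  have key0 : ∫ ω, T ω * Y0 ω * h0 (S ω) ∂P = ∫ ω, π0 (S ω) * Y0 ω * h0 (S ω) ∂P :=
    my_core hm P hT hT01 hY0 hY0b ((hh0m.comp hSm).stronglyMeasurable)
      (fun ω => hh0b (S ω)) ((hπ0m.comp hSm).stronglyMeasurable) (fun ω => hπ0b (S ω))
      hcond hprod0
  -- measurability and integrability facts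
  have hYmeas : Measurable Y := by
    have hfe : Y = fun ω => T ω * Y1 ω + (1 - T ω) * Y0 ω := funext hYdef
    rw [hfe]
    exact (hT.mul hY1).add ((measurable_const.sub hT).mul hY0)
  have intY1 : Integrable Y1 P := my_integrable_of_bdd hY1 hY1b
  have intY0 : Integrable Y0 P := my_integrable_of_bdd hY0 hY0b
  have intA : Integrable (fun ω => μ1 (S ω)) P :=
    my_integrable_of_bdd (hμ1m.comp hS) (fun ω => hμ1b (S ω))
  have intC : Integrable (fun ω => μ0 (S ω)) P :=
    my_integrable_of_bdd (hμ0m.comp hS) (fun ω => hμ0b (S ω))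
  have intB1 : Integrable (fun ω => T ω * Y ω * h1 (S ω)) P :=
    my_integrable_of_bdd ((hT.mul hYmeas).mul (hh1m.comp hS))
      (fun ω => my_abs_mul_le (my_abs_mul_le (hTb ω) (hYb ω)) (hh1b (S ω)))
  have intB2 : Integrable (fun ω => T ω * (μ1 (S ω) * h1 (S ω))) P :=
    my_integrable_of_bdd (hT.mul ((hμ1m.comp hS).mul (hh1m.comp hS)))
      (fun ω => my_abs_mul_le (hTb ω) (my_abs_mul_le (hμ1b (S ω)) (hh1b (S ω))))
  have intD1 : Integrable (fun ω => (1 - T ω) * Y ω * h0 (S ω)) P :=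
    my_integrable_of_bdd (((measurable_const.sub hT).mul hYmeas).mul (hh0m.comp hS))
      (fun ω => my_abs_mul_le (my_abs_mul_le (h1Tb ω) (hYb ω)) (hh0b (S ω)))
  have intD2 : Integrable (fun ω => (1 - T ω) * (μ0 (S ω) * h0 (S ω))) P :=
    my_integrable_of_bdd ((measurable_const.sub hT).mul ((hμ0m.comp hS).mul (hh0m.comp hS)))
      (fun ω => my_abs_mul_le (h1Tb ω) (my_abs_mul_le (hμ0b (S ω)) (hh0b (S ω))))
  have intY0h : Integrable (fun ω => Y0 ω * h0 (S ω)) P :=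
    my_integrable_of_bdd (hY0.mul (hh0m.comp hS))
      (fun ω => my_abs_mul_le (hY0b ω) (hh0b (S ω)))
  have intTY0h : Integrable (fun ω => T ω * Y0 ω * h0 (S ω)) P :=
    my_integrable_of_bdd ((hT.mul hY0).mul (hh0m.comp hS))
      (fun ω => my_abs_mul_le (my_abs_mul_le (hTb ω) (hY0b ω)) (hh0b (S ω)))
  have intPY0h : Integrable (fun ω => π0 (S ω) * Y0 ω * h0 (S ω)) P :=
    my_integrable_of_bdd (((hπ0m.comp hS).mul hY0).mul (hh0m.comp hS))
      (fun ω => my_abs_mul_le (my_abs_mul_le (hπ0b (S ω)) (hY0b ω)) (hh0b (S ω)))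
  have intM0h : Integrable (fun ω => μ0 (S ω) * h0 (S ω)) P :=
    my_integrable_of_bdd ((hμ0m.comp hS).mul (hh0m.comp hS))
      (fun ω => my_abs_mul_le (hμ0b (S ω)) (hh0b (S ω)))
  have intTM0h : Integrable (fun ω => T ω * (μ0 (S ω) * h0 (S ω))) P :=
    my_integrable_of_bdd (hT.mul ((hμ0m.comp hS).mul (hh0m.comp hS)))
      (fun ω => my_abs_mul_le (hTb ω) (my_abs_mul_le (hμ0b (S ω)) (hh0b (S ω))))
  have intPM0h : Integrable (fun ω => π0 (S ω) * (μ0 (S ω) * h0 (S ω))) P :=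
    my_integrable_of_bdd ((hπ0m.comp hS).mul ((hμ0m.comp hS).mul (hh0m.comp hS)))
      (fun ω => my_abs_mul_le (hπ0b (S ω)) (my_abs_mul_le (hμ0b (S ω)) (hh0b (S ω))))
  -- the four key integral computations
  have hTY : ∀ ω, T ω * Y ω = T ω * Y1 ω := by
    intro ω; rcases hT01 ω with h | h <;> rw [hYdef ω, h] <;> ring
  have hTY0 : ∀ ω, (1 - T ω) * Y ω = (1 - T ω) * Y0 ω := by
    intro ω; rcases hT01 ω with h | h <;> rw [hYdef ω, h] <;> ring
  have eJ1 : ∫ ω, T ω * Y ω * h1 (S ω) ∂P = ∫ ω, Y1 ω ∂P := by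
    have s0 : (fun ω => T ω * Y ω * h1 (S ω)) = (fun ω => T ω * Y1 ω * h1 (S ω)) :=
      funext fun ω => by rw [hTY ω]
    calc ∫ ω, T ω * Y ω * h1 (S ω) ∂P = ∫ ω, T ω * Y1 ω * h1 (S ω) ∂P := by rw [s0]
      _ = ∫ ω, π0 (S ω) * Y1 ω * h1 (S ω) ∂P := key1
      _ = ∫ ω, Y1 ω ∂P := by
          refine integral_congr_ae ?_
          filter_upwards [hae] with ω hω
          obtain ⟨f1, -, -, -⟩ := hω
          calc π0 (S ω) * Y1 ω * h1 (S ω) = (π0 (S ω) * h1 (S ω)) * Y1 ω := by ring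
            _ = Y1 ω := by rw [f1, one_mul]
  have eK1 : ∫ ω, T ω * (μ1 (S ω) * h1 (S ω)) ∂P = ∫ ω, μ1 (S ω) ∂P := by
    have hmom := hπ0mom (fun x => μ1 x * h1 x) (hμ1m.mul hh1m)
      ⟨Cμ1 * M, fun x => my_abs_mul_le (hμ1b x) (hh1b x)⟩
    rw [hmom]
    refine integral_congr_ae ?_
    filter_upwards [hae] with ω hω
    obtain ⟨f1, -, -, -⟩ := hω
    calc π0 (S ω) * (μ1 (S ω) * h1 (S ω)) = (π0 (S ω) * h1 (S ω)) * μ1 (S ω) := by ring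
      _ = μ1 (S ω) := by rw [f1, one_mul]
  have eJ0 : ∫ ω, (1 - T ω) * Y ω * h0 (S ω) ∂P = ∫ ω, Y0 ω ∂P := by
    have s1 : ∫ ω, (1 - T ω) * Y ω * h0 (S ω) ∂P
        = ∫ ω, (Y0 ω * h0 (S ω) - T ω * Y0 ω * h0 (S ω)) ∂P := by
      refine integral_congr_ae (Filter.Eventually.of_forall fun ω => ?_)
      have h' := hTY0 ω
      calc (1 - T ω) * Y ω * h0 (S ω) = ((1 - T ω) * Y ω) * h0 (S ω) := by ring
        _ = ((1 - T ω) * Y0 ω) * h0 (S ω) := by rw [h']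
        _ = Y0 ω * h0 (S ω) - T ω * Y0 ω * h0 (S ω) := by ring
    rw [s1, integral_sub intY0h intTY0h, key0, ← integral_sub intY0h intPY0h]
    refine integral_congr_ae ?_
    filter_upwards [hae] with ω hω
    obtain ⟨-, f0, -, -⟩ := hω
    calc Y0 ω * h0 (S ω) - π0 (S ω) * Y0 ω * h0 (S ω)
        = ((1 - π0 (S ω)) * h0 (S ω)) * Y0 ω := by ring
      _ = Y0 ω := by rw [f0, one_mul]
  have eK0 : ∫ ω, (1 - T ω) * (μ0 (S ω) * h0 (S ω)) ∂P = ∫ ω, μ0 (S ω) ∂P := by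
    have hmom := hπ0mom (fun x => μ0 x * h0 x) (hμ0m.mul hh0m)
      ⟨Cμ0 * M, fun x => my_abs_mul_le (hμ0b x) (hh0b x)⟩
    have s1 : ∫ ω, (1 - T ω) * (μ0 (S ω) * h0 (S ω)) ∂P
        = ∫ ω, (μ0 (S ω) * h0 (S ω) - T ω * (μ0 (S ω) * h0 (S ω))) ∂P := by
      refine integral_congr_ae (Filter.Eventually.of_forall fun ω => ?_)
      ring
    rw [s1, integral_sub intM0h intTM0h, hmom, ← integral_sub intM0h intPM0h]
    refine integral_congr_ae ?_
    filter_upwards [hae] with ω hω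
    obtain ⟨-, f0, -, -⟩ := hω
    calc μ0 (S ω) * h0 (S ω) - π0 (S ω) * (μ0 (S ω) * h0 (S ω))
        = ((1 - π0 (S ω)) * h0 (S ω)) * μ0 (S ω) := by ring
      _ = μ0 (S ω) := by rw [f0, one_mul]
  -- rewrite the right-hand side integrand a.e.
  have congrRHS : ∫ ω, (μ1 (S ω) + T ω * (Y ω - μ1 (S ω)) / π0 (S ω)
          - μ0 (S ω) - (1 - T ω) * (Y ω - μ0 (S ω)) / (1 - π0 (S ω))) ∂P
      = ∫ ω, (μ1 (S ω) + (T ω * Y ω * h1 (S ω) - T ω * (μ1 (S ω) * h1 (S ω)))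
          - μ0 (S ω) - ((1 - T ω) * Y ω * h0 (S ω) - (1 - T ω) * (μ0 (S ω) * h0 (S ω)))) ∂P := by
    refine integral_congr_ae ?_
    filter_upwards [hae] with ω hω
    obtain ⟨-, -, g1, g0⟩ := hω
    rw [div_eq_mul_inv, div_eq_mul_inv, ← g1, ← g0]
    ring
  have intBdiff : Integrable
      (fun ω => T ω * Y ω * h1 (S ω) - T ω * (μ1 (S ω) * h1 (S ω))) P := intB1.sub intB2
  have intDdiff : Integrable
      (fun ω => (1 - T ω) * Y ω * h0 (S ω) - (1 - T ω) * (μ0 (S ω) * h0 (S ω))) P :=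
    intD1.sub intD2
  have intAB : Integrable (fun ω => μ1 (S ω)
      + (T ω * Y ω * h1 (S ω) - T ω * (μ1 (S ω) * h1 (S ω)))) P := intA.add intBdiff
  have intABC : Integrable (fun ω => μ1 (S ω)
      + (T ω * Y ω * h1 (S ω) - T ω * (μ1 (S ω) * h1 (S ω))) - μ0 (S ω)) P := intAB.sub intC
  have hRHS : ∫ ω, (μ1 (S ω) + T ω * (Y ω - μ1 (S ω)) / π0 (S ω)
          - μ0 (S ω) - (1 - T ω) * (Y ω - μ0 (S ω)) / (1 - π0 (S ω))) ∂P
      = ∫ ω, Y1 ω ∂P - ∫ ω, Y0 ω ∂P := by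
    rw [congrRHS, integral_sub intABC intDdiff, integral_sub intAB intC,
      integral_add intA intBdiff, integral_sub intB1 intB2, integral_sub intD1 intD2,
      eJ1, eK1, eJ0, eK0]
    ring
  rw [integral_sub intY1 intY0, hRHS]
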